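/- Let n be a natural number and let a, b : Fin n → ℝ satisfy a i > 0 and b i > 0 for every i, Σᵢ a i = Σᵢ b i = N with N > 0, and |b i − a i| < a i for every i. Writing Δ i = b i − a i, one has | (1/N)·Σᵢ (a i)·log₂((a i)/(b i)) − (1/(2·N·ln 2))·Σᵢ (Δ i)²/(a i) | ≤ (1/(N·ln 2))·Σᵢ (a i)·|Δ i|³/(3·(a i − |Δ i|)³). -/

import Mathlib

open Real Finset

lemma key_taylor {x : ℝ} (h : |x| < 1) :
    |Real.log (1 + x) - (x - x ^ 2 / 2)| ≤ |x| ^ 3 / (3 * (1 - |x|)) := by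
  have hx : |(-x)| < 1 := by rwa [abs_neg]
  have h1 := Real.hasSum_pow_div_log_of_abs_lt_one hx
  -- h1 : HasSum (fun n => (-x)^(n+1)/(n+1)) (-log (1 - -x))
  have h1' : HasSum (fun n : ℕ => -((-x) ^ (n + 1) / (n + 1))) (Real.log (1 + x)) := by
    have := h1.neg
    simpa [sub_neg_eq_add] using this
  set f : ℕ → ℝ := fun n => -((-x) ^ (n + 1) / (n + 1)) with hf
  have hsum2 : ∑ i ∈ Finset.range 2, f i = x - x ^ 2 / 2 := by
    simp [hf, Finset.sum_range_succ]
    ring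
  have h2 : HasSum (fun n : ℕ => f (n + 2)) (Real.log (1 + x) - (x - x ^ 2 / 2)) := by
    rw [← hsum2]
    exact (hasSum_nat_add_iff' 2).2 h1'
  have hgeom : HasSum (fun n : ℕ => |x| ^ 3 / 3 * |x| ^ n) (|x| ^ 3 / 3 * (1 - |x|)⁻¹) :=
    (hasSum_geometric_of_lt_one (abs_nonneg x) h).mul_left _
  have hbound : ∀ n : ℕ, ‖f (n + 2)‖ ≤ |x| ^ 3 / 3 * |x| ^ n := by
    intro n
    have hpos : (0:ℝ) < (n : ℝ) + 2 + 1 := by positivity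
    have : ‖f (n + 2)‖ = |x| ^ (n + 3) / ((n : ℝ) + 3) := by
      simp [hf, abs_div, abs_pow, abs_neg]
      rw [abs_of_pos (by positivity : (0:ℝ) < (n:ℝ) + 2 + 1)]
      ring_nf
    rw [this]
    have h3 : (3:ℝ) ≤ (n : ℝ) + 3 := by linarith [Nat.cast_nonneg (α := ℝ) n]
    have hx3 : |x| ^ (n + 3) = |x| ^ 3 * |x| ^ n := by ring
    rw [hx3]
    rw [div_le_iff₀ (by linarith)]
    have hle : |x| ^ 3 * |x| ^ n * 3 ≤ |x| ^ 3 * |x| ^ n * ((n:ℝ) + 3) := by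
      apply mul_le_mul_of_nonneg_left h3 (by positivity)
    linarith
  calc |Real.log (1 + x) - (x - x ^ 2 / 2)| = ‖Real.log (1 + x) - (x - x ^ 2 / 2)‖ := rfl
    _ ≤ ∑' n : ℕ, ‖f (n + 2)‖ := h2.tsum_eq ▸ norm_tsum_le_tsum_norm
        (Summable.of_nonneg_of_le (fun n => norm_nonneg _) hbound hgeom.summable)
    _ ≤ ∑' n : ℕ, |x| ^ 3 / 3 * |x| ^ n := Summable.tsum_le_tsum hbound
        (Summable.of_nonneg_of_le (fun n => norm_nonneg _) hbound hgeom.summable)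
        hgeom.summable
    _ = |x| ^ 3 / 3 * (1 - |x|)⁻¹ := hgeom.tsum_eq
    _ = |x| ^ 3 / (3 * (1 - |x|)) := by rw [div_mul_eq_div_div_swap]; ring

lemma term_identity (A B L : ℝ) (hA : A ≠ 0) (hL : L ≠ 0) :
    A * ((Real.log A - Real.log B) / L)
      = -(A * ((Real.log B - Real.log A) - ((B - A) / A - ((B - A) / A) ^ 2 / 2))) / L
        - (B - A) / L + (B - A) ^ 2 / A / (2 * L) := by
  field_simp
  ring

theorem stmt5 (n : ℕ) (a b : Fin n → ℝ) (N : ℝ)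
    (ha : ∀ i, 0 < a i) (hb : ∀ i, 0 < b i)
    (hsa : ∑ i, a i = N) (hsb : ∑ i, b i = N) (hN : 0 < N)
    (hclose : ∀ i, |b i - a i| < a i) :
    |(1 / N) * ∑ i, a i * Real.logb 2 (a i / b i)
        - (1 / (2 * N * Real.log 2)) * ∑ i, (b i - a i) ^ 2 / a i|
      ≤ (1 / (N * Real.log 2)) * ∑ i, a i * |b i - a i| ^ 3 / (3 * (a i - |b i - a i|) ^ 3) := by
  have hL2 : 0 < Real.log 2 := Real.log_pos (by norm_num)
  set L2 := Real.log 2 with hL2def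
  set x : Fin n → ℝ := fun i => (b i - a i) / a i with hxdef
  set E : Fin n → ℝ := fun i => Real.log (1 + x i) - (x i - x i ^ 2 / 2) with hEdef
  have hxlt : ∀ i, |x i| < 1 := by
    intro i
    rw [hxdef]
    simp only
    rw [abs_div, abs_of_pos (ha i), div_lt_one (ha i)]
    exact hclose i
  have hlog1x : ∀ i, Real.log (1 + x i) = Real.log (b i) - Real.log (a i) := by
    intro i
    have : 1 + x i = b i / a i := by
      field_simp [hxdef, (ha i).ne']
      simp only [hxdef]
      rw [add_mul, div_mul_cancel₀ _ (ha i).ne']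
      ring
    rw [this, Real.log_div (hb i).ne' (ha i).ne']
  -- key algebraic identity
  have hkey : (1 / N) * ∑ i, a i * Real.logb 2 (a i / b i)
      - (1 / (2 * N * L2)) * ∑ i, (b i - a i) ^ 2 / a i
      = -(1 / (N * L2)) * ∑ i, a i * E i := by
    have hterm : ∀ i, a i * Real.logb 2 (a i / b i)
        = -(a i * E i) / L2 - (b i - a i) / L2 + (b i - a i) ^ 2 / a i / (2 * L2) := by
      intro i
      have hE2 : E i = (Real.log (b i) - Real.log (a i))
          - ((b i - a i) / a i - ((b i - a i) / a i) ^ 2 / 2) := by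
        simp only [hEdef, hlog1x i, hxdef]
        rw [← hlog1x i]
      have hlb : Real.logb 2 (a i / b i) * a i
          = a i * ((Real.log (a i) - Real.log (b i)) / L2) := by
        rw [Real.logb, Real.log_div (ha i).ne' (hb i).ne']
        ring
      rw [mul_comm (a i), hlb, hE2]
      exact term_identity (a i) (b i) L2 (ha i).ne' hL2.ne'
    rw [Finset.sum_congr rfl (fun i _ => hterm i)]
    rw [Finset.sum_add_distrib, Finset.sum_sub_distrib]
    have hzero : ∑ i, (b i - a i) / L2 = 0 := by
      rw [← Finset.sum_div, Finset.sum_sub_distrib, hsa, hsb, sub_self, zero_div]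
    rw [hzero]
    rw [← Finset.sum_div, ← Finset.sum_div]
    field_simp
    simp only [Finset.sum_neg_distrib]
    ring
  rw [hkey]
  rw [abs_mul, abs_neg, abs_of_pos (by positivity : (0:ℝ) < 1 / (N * L2))]
  calc (1 / (N * L2)) * |∑ i, a i * E i|
      ≤ (1 / (N * L2)) * ∑ i, |a i * E i| :=
        mul_le_mul_of_nonneg_left (Finset.abs_sum_le_sum_abs _ _) (by positivity)
    _ ≤ ∑ i, 1 / (N * L2) * (a i * |b i - a i| ^ 3 / (3 * (a i - |b i - a i|) ^ 3)) := by
        rw [Finset.mul_sum]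
        apply Finset.sum_le_sum
        intro i _
        apply mul_le_mul_of_nonneg_left _ (by positivity)
        rw [abs_mul, abs_of_pos (ha i)]
        have hE : |E i| ≤ |x i| ^ 3 / (3 * (1 - |x i|)) := key_taylor (hxlt i)
        have h1 : a i * |E i| ≤ a i * (|x i| ^ 3 / (3 * (1 - |x i|))) :=
          mul_le_mul_of_nonneg_left hE (ha i).le
        refine h1.trans ?_
        have hax : |x i| = |b i - a i| / a i := by
          rw [hxdef]; simp only
          rw [abs_div, abs_of_pos (ha i)]
        have haD : 0 < a i - |b i - a i| := by linarith [hclose i]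
        have hD : 0 ≤ |b i - a i| := abs_nonneg _
        have h1a : 1 - |b i - a i| / a i = (a i - |b i - a i|) / a i := by
          rw [sub_div, div_self (ha i).ne']
        have hgen : ∀ A D : ℝ, 0 < A → 0 < A - D →
            A * ((D / A) ^ 3 / (3 * ((A - D) / A))) = D ^ 3 / (3 * A * (A - D)) := by
          intro A D hA hAD
          field_simp
        have heq : a i * (|x i| ^ 3 / (3 * (1 - |x i|)))
            = |b i - a i| ^ 3 / (3 * a i * (a i - |b i - a i|)) := by
          rw [hax, h1a]
          exact hgen (a i) (|b i - a i|) (ha i) haD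
        rw [heq]
        rw [div_le_div_iff₀ (by nlinarith [ha i] : (0:ℝ) < 3 * a i * (a i - |b i - a i|))
          (mul_pos (by norm_num) (pow_pos haD 3))]
        have h2 : (a i - |b i - a i|) ^ 2 ≤ a i ^ 2 := by nlinarith
        nlinarith [mul_le_mul_of_nonneg_left h2
          (show (0:ℝ) ≤ 3 * |b i - a i| ^ 3 * (a i - |b i - a i|) by positivity)]
    _ = (1 / (N * L2)) * ∑ i, a i * |b i - a i| ^ 3 / (3 * (a i - |b i - a i|) ^ 3) := by
        rw [Finset.mul_sum]
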